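/- arXiv:2502.04659 — 5 statements merged into one kernel-verified Lean document; each statement's English description precedes it below -/
import Mathlib

section
/- Let V be a type, let n ≥ 2 be a natural number, let d : ℕ → V be injective on {1,…,n}, and let E ⊆ {1,…,n}. Then the two set equalities { d(i+1) : i odd, 1 ≤ i ≤ n−1, i ∈ E } = { d(i) : i even, 2 ≤ i ≤ n, i ∈ E } and { d(i+1) : i even, 2 ≤ i ≤ n−1, i ∈ E } = { d(i) : i odd, 3 ≤ i ≤ n, i ∈ E } both hold if and only if E = ∅ or E = {1,…,n}. -/
/-- combinatorial core of Lemma 1 (all-or-nothing execution under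
the SVS General System Contract). -/
theorem stmt0 {V : Type*} (n : ℕ) (hn : 2 ≤ n) (d : ℕ → V)
    (hd : Set.InjOn d (Set.Icc 1 n)) (E : Set ℕ) (hE : E ⊆ Set.Icc 1 n) :
    (({v : V | ∃ i, Odd i ∧ 1 ≤ i ∧ i ≤ n - 1 ∧ i ∈ E ∧ v = d (i + 1)} =
        {v : V | ∃ i, Even i ∧ 2 ≤ i ∧ i ≤ n ∧ i ∈ E ∧ v = d i}) ∧
      ({v : V | ∃ i, Even i ∧ 2 ≤ i ∧ i ≤ n - 1 ∧ i ∈ E ∧ v = d (i + 1)} =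
        {v : V | ∃ i, Odd i ∧ 3 ≤ i ∧ i ≤ n ∧ i ∈ E ∧ v = d i})) ↔
      (E = ∅ ∨ E = Set.Icc 1 n) := by
  constructor
  · rintro ⟨h1, h2⟩
    by_cases hne : E = ∅
    · exact Or.inl hne
    right
    -- step up
    have up : ∀ i ∈ E, i + 1 ≤ n → i + 1 ∈ E := by
      intro i hi hin
      obtain ⟨h1i, h2i⟩ := hE hi
      rcases Nat.even_or_odd i with he | ho
      · have hmem : d (i + 1) ∈
            {v : V | ∃ j, Even j ∧ 2 ≤ j ∧ j ≤ n - 1 ∧ j ∈ E ∧ v = d (j + 1)} :=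
          ⟨i, he, by
            rcases he with ⟨m, hm⟩; omega, by omega, hi, rfl⟩
        rw [h2] at hmem
        obtain ⟨j, _, hj3, hjn, hjE, hjd⟩ := hmem
        have : i + 1 = j := hd ⟨by omega, hin⟩ ⟨by omega, hjn⟩ hjd
        rwa [this]
      · have hmem : d (i + 1) ∈
            {v : V | ∃ j, Odd j ∧ 1 ≤ j ∧ j ≤ n - 1 ∧ j ∈ E ∧ v = d (j + 1)} :=
          ⟨i, ho, by omega, by omega, hi, rfl⟩
        rw [h1] at hmem
        obtain ⟨j, _, hj3, hjn, hjE, hjd⟩ := hmem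
        have : i + 1 = j := hd ⟨by omega, hin⟩ ⟨by omega, hjn⟩ hjd
        rwa [this]
    -- step down
    have down : ∀ i ∈ E, 2 ≤ i → i - 1 ∈ E := by
      intro i hi h2i
      obtain ⟨h1i, hin⟩ := hE hi
      rcases Nat.even_or_odd i with he | ho
      · have hmem : d i ∈
            {v : V | ∃ j, Even j ∧ 2 ≤ j ∧ j ≤ n ∧ j ∈ E ∧ v = d j} :=
          ⟨i, he, h2i, hin, hi, rfl⟩
        rw [← h1] at hmem
        obtain ⟨j, _, hj1, hjn, hjE, hjd⟩ := hmem
        have : i = j + 1 := hd ⟨h1i, hin⟩ ⟨by omega, by omega⟩ hjd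
        have : i - 1 = j := by omega
        rwa [this]
      · have hmem : d i ∈
            {v : V | ∃ j, Odd j ∧ 3 ≤ j ∧ j ≤ n ∧ j ∈ E ∧ v = d j} :=
          ⟨i, ho, by rcases ho with ⟨m, hm⟩; omega, hin, hi, rfl⟩
        rw [← h2] at hmem
        obtain ⟨j, _, hj2, hjn, hjE, hjd⟩ := hmem
        have : i = j + 1 := hd ⟨h1i, hin⟩ ⟨by omega, by omega⟩ hjd
        have : i - 1 = j := by omega
        rwa [this]
    obtain ⟨k, hk⟩ := Set.nonempty_iff_ne_empty.mpr hne
    obtain ⟨hk1, hkn⟩ := hE hk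
    have key : ∀ j : ℕ, j < k → k - j ∈ E := by
      intro j
      induction j with
      | zero => intro _; simpa using hk
      | succ m ih =>
        intro hm
        have h1 : k - m ∈ E := ih (by omega)
        have h2 : 2 ≤ k - m := by omega
        have := down _ h1 h2
        have heq : k - m - 1 = k - (m + 1) := by omega
        rwa [heq] at this
    have h1E : 1 ∈ E := by
      rcases Nat.eq_or_lt_of_le hk1 with h | h
      · exact h ▸ hk
      · have := key (k - 1) (by omega)
        have heq : k - (k - 1) = 1 := by omega
        rwa [heq] at this
    have all : ∀ m : ℕ, 1 ≤ m → m ≤ n → m ∈ E := by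
      intro m
      induction m with
      | zero => omega
      | succ p ih =>
        intro _ hpn
        rcases Nat.eq_zero_or_pos p with h | h
        · subst h; exact h1E
        · exact up p (ih h (by omega)) hpn
    apply Set.Subset.antisymm hE
    intro m hm
    exact all m hm.1 hm.2
  · rintro (rfl | rfl)
    · constructor <;> · ext v; simp
    · constructor
      · ext v
        simp only [Set.mem_setOf_eq, Set.mem_Icc]
        constructor
        · rintro ⟨i, ho, h1, h2, _, rfl⟩
          exact ⟨i + 1, ho.add_one, by omega, by omega, ⟨by omega, by omega⟩, rfl⟩
        · rintro ⟨j, he, h2, hjn, _, rfl⟩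
          refine ⟨j - 1, ?_, by omega, by omega, ⟨by omega, by omega⟩, ?_⟩
          · rcases he with ⟨m, hm⟩
            exact ⟨m - 1, by omega⟩
          · congr 1; omega
      · ext v
        simp only [Set.mem_setOf_eq, Set.mem_Icc]
        constructor
        · rintro ⟨i, he, h1, h2, _, rfl⟩
          refine ⟨i + 1, he.add_one, by omega, by omega, ⟨by omega, by omega⟩, rfl⟩
        · rintro ⟨j, ho, h3, hjn, _, rfl⟩
          refine ⟨j - 1, ?_, ?_, by omega, ⟨by omega, by omega⟩, ?_⟩
          · rcases ho with ⟨m, hm⟩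
            exact ⟨m, by omega⟩
          · rcases ho with ⟨m, hm⟩; omega
          · congr 1; omega
end

section
/- Let k ≥ 1, let i : {0,…,k−1} → ℕ be a bijection onto the odd numbers {1, 3, …, 2k−1}, let j : {0,…,k−1} → ℕ be a bijection onto the even numbers {2, 4, …, 2k}, and let f, l ∈ {0,…,k−1} satisfy i(f) = 1 and j(l) = 2k. Then the conjunction of (a) j(r) = i(r) + 1 for all r, and (b) the list (j(0)+1, j(1)+1, …, j(k−1)+1) with its l-th entry deleted equals the list (i(0), i(1), …, i(k−1)) with its f-th entry deleted, holds if and only if either i(r) = 2r+1 and j(r) = 2r+2 for all r, or i(r) = 2(k−1−r)+1 and j(r) = 2(k−1−r)+2 for all r. -/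
/-- combinatorial core of Lemma 2 (order preserved or fully reversed). -/
theorem stmt2 (k : ℕ) (hk : 1 ≤ k) (i j : Fin k → ℕ)
    (hi_inj : Function.Injective i)
    (hi_range : Set.range i = {m : ℕ | Odd m ∧ 1 ≤ m ∧ m ≤ 2 * k - 1})
    (hj_inj : Function.Injective j)
    (hj_range : Set.range j = {m : ℕ | Even m ∧ 2 ≤ m ∧ m ≤ 2 * k})
    (f l : Fin k) (hf : i f = 1) (hl : j l = 2 * k) :
    ((∀ r : Fin k, j r = i r + 1) ∧
      (List.ofFn (fun r : Fin k => j r + 1)).eraseIdx (l : ℕ) =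
        (List.ofFn i).eraseIdx (f : ℕ)) ↔
    ((∀ r : Fin k, i r = 2 * (r : ℕ) + 1 ∧ j r = 2 * (r : ℕ) + 2) ∨
      (∀ r : Fin k, i r = 2 * (k - 1 - (r : ℕ)) + 1 ∧ j r = 2 * (k - 1 - (r : ℕ)) + 2)) := by
  clear hi_inj hi_range hj_inj hj_range
  have hlk : (l : ℕ) < k := l.isLt
  have hfk : (f : ℕ) < k := f.isLt
  constructor
  · rintro ⟨ha, hb⟩
    have hil : i l = 2 * k - 1 := by have := ha l; omega
    have key : ∀ t (h1 : t < k) (h2 : t + 1 < k),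
        (if t < (l : ℕ) then j ⟨t, h1⟩ + 1 else j ⟨t + 1, h2⟩ + 1) =
        (if t < (f : ℕ) then i ⟨t, h1⟩ else i ⟨t + 1, h2⟩) := by
      intro t h1 h2
      have hA : t < ((List.ofFn fun r : Fin k => j r + 1).eraseIdx (l : ℕ)).length := by
        rw [List.length_eraseIdx]; simp; omega
      have e := List.getElem_of_eq hb hA
      simp only [List.getElem_eraseIdx, List.getElem_ofFn] at e
      split_ifs at e ⊢ <;> simpa using e
    rcases Nat.lt_trichotomy (f : ℕ) (l : ℕ) with hfl | hfl | hfl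
    · -- f < l : order preserved
      have hf0 : (f : ℕ) = 0 := by
        by_contra h
        have := key 0 (by omega) (by omega)
        rw [if_pos (by omega), if_pos (by omega)] at this
        have := ha ⟨0, by omega⟩
        omega
      have step : ∀ t (h1 : t < k) (h2 : t + 1 < k), t < (l : ℕ) →
          i ⟨t + 1, h2⟩ = i ⟨t, h1⟩ + 2 := by
        intro t h1 h2 ht
        have := key t h1 h2
        rw [if_pos ht, if_neg (by omega)] at this
        have := ha ⟨t, h1⟩
        omega
      have ival : ∀ t (h1 : t < k), t ≤ (l : ℕ) → i ⟨t, h1⟩ = 2 * t + 1 := by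
        intro t
        induction t with
        | zero =>
          intro h1 _
          have : f = ⟨0, h1⟩ := Fin.ext hf0
          rw [← this, hf]
        | succ n ih =>
          intro h1 ht
          rw [step n (by omega) h1 (by omega), ih (by omega) (by omega)]
          omega
      have hl1 : (l : ℕ) = k - 1 := by
        by_contra h
        have := key (l : ℕ) (by omega) (by omega)
        rw [if_neg (by omega), if_neg (by omega)] at this
        have := ha ⟨(l : ℕ) + 1, by omega⟩
        omega
      left
      intro r
      have hir : i r = 2 * (r : ℕ) + 1 := by
        have := ival r r.isLt (by omega)
        simpa using this
      exact ⟨hir, by rw [ha r, hir]⟩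
    · -- f = l : only possible for k = 1
      by_cases hk1 : k = 1
      · subst hk1
        left
        intro r
        have hr : r = f := Subsingleton.elim r f
        have := ha r
        rw [hr, hf] at this ⊢
        simp [hr, hf]
        omega
      · exfalso
        have := key 0 (by omega) (by omega)
        have ha0 := ha ⟨0, by omega⟩
        have ha1 := ha ⟨1, by omega⟩
        by_cases h0 : 0 < (f : ℕ)
        · rw [if_pos (by omega), if_pos h0] at this; omega
        · rw [if_neg (by omega), if_neg h0] at this
          simp only [Nat.zero_add] at this
          omega
    · -- l < f : order reversed
      have hl0 : (l : ℕ) = 0 := by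
        by_contra h
        have := key 0 (by omega) (by omega)
        rw [if_pos (by omega), if_pos (by omega)] at this
        have := ha ⟨0, by omega⟩
        omega
      have step : ∀ t (h1 : t < k) (h2 : t + 1 < k), t < (f : ℕ) →
          i ⟨t + 1, h2⟩ + 2 = i ⟨t, h1⟩ := by
        intro t h1 h2 ht
        have := key t h1 h2
        rw [if_neg (by omega), if_pos ht] at this
        have := ha ⟨t + 1, h2⟩
        omega
      have ival : ∀ t (h1 : t < k), t ≤ (f : ℕ) → i ⟨t, h1⟩ = 2 * (k - 1 - t) + 1 := by
        intro t
        induction t with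
        | zero =>
          intro h1 _
          have : l = ⟨0, h1⟩ := Fin.ext hl0
          rw [← this, hil]
          omega
        | succ n ih =>
          intro h1 ht
          have hs := step n (by omega) h1 (by omega)
          have := ih (by omega) (by omega)
          omega
      have hf1 : (f : ℕ) = k - 1 := by
        by_contra h
        have := key (f : ℕ) (by omega) (by omega)
        rw [if_neg (by omega), if_neg (by omega)] at this
        have := ha ⟨(f : ℕ) + 1, by omega⟩
        omega
      right
      intro r
      have hir : i r = 2 * (k - 1 - (r : ℕ)) + 1 := by
        have := ival r r.isLt (by omega)
        simpa using this
      exact ⟨hir, by rw [ha r, hir]⟩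
  · rintro (h | h)
    · have hf0 : (f : ℕ) = 0 := by have := (h f).1; omega
      have hl1 : (l : ℕ) = k - 1 := by have := (h l).2; omega
      refine ⟨fun r => by have := h r; omega, ?_⟩
      apply List.ext_getElem
      · simp [List.length_eraseIdx]
      · intro t h1 h2
        have ht : t < k - 1 := by
          rw [List.length_eraseIdx] at h1; simp at h1; omega
        simp only [List.getElem_eraseIdx, List.getElem_ofFn]
        rw [dif_pos (by omega), dif_neg (by omega)]
        have e1 : j ⟨t, by omega⟩ = 2 * t + 2 := by simpa using (h ⟨t, by omega⟩).2
        have e2 : i ⟨t + 1, by omega⟩ = 2 * (t + 1) + 1 := by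
          simpa using (h ⟨t + 1, by omega⟩).1
        omega
    · have hf1 : (f : ℕ) = k - 1 := by have := (h f).1; omega
      have hl0 : (l : ℕ) = 0 := by have := (h l).2; omega
      refine ⟨fun r => by have := h r; omega, ?_⟩
      apply List.ext_getElem
      · simp [List.length_eraseIdx]
      · intro t h1 h2
        have ht : t < k - 1 := by
          rw [List.length_eraseIdx] at h1; simp at h1; omega
        simp only [List.getElem_eraseIdx, List.getElem_ofFn]
        rw [dif_neg (by omega), dif_pos (by omega)]
        have e1 : j ⟨t + 1, by omega⟩ = 2 * (k - 1 - (t + 1)) + 2 := by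
          simpa using (h ⟨t + 1, by omega⟩).2
        have e2 : i ⟨t, by omega⟩ = 2 * (k - 1 - t) + 1 := by
          simpa using (h ⟨t, by omega⟩).1
        omega
end

section
/- Let k ≥ 1, let i : {0,…,k−1} → ℕ be a bijection onto the odd numbers {1, 3, …, 2k−1}, let j : {0,…,k−1} → ℕ be a bijection onto the even numbers {2, 4, …, 2k}, and let f, l ∈ {0,…,k−1} satisfy i(f) = 1 and j(l) = 2k. Assume (a) j(r) = i(r) + 1 for all r, (b) the list (j(0)+1, j(1)+1, …, j(k−1)+1) with its l-th entry deleted equals the list (i(0), i(1), …, i(k−1)) with its f-th entry deleted, and additionally l = 0 (i.e., j(0) = 2k). Then f = k−1 and, for all r, i(r) = 2(k−1−r)+1 and j(r) = 2(k−1−r)+2. -/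
/-- Case 1 in the proof of Lemma 2 (full reversal). -/
theorem stmt3 (k : ℕ) (hk : 1 ≤ k) (i j : Fin k → ℕ)
    (hi_inj : Function.Injective i)
    (hi_range : Set.range i = {m : ℕ | Odd m ∧ 1 ≤ m ∧ m ≤ 2 * k - 1})
    (hj_inj : Function.Injective j)
    (hj_range : Set.range j = {m : ℕ | Even m ∧ 2 ≤ m ∧ m ≤ 2 * k})
    (f l : Fin k) (hf : i f = 1) (hl : j l = 2 * k)
    (ha : ∀ r : Fin k, j r = i r + 1)
    (hb : (List.ofFn (fun r : Fin k => j r + 1)).eraseIdx (l : ℕ) =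
        (List.ofFn i).eraseIdx (f : ℕ))
    (hl0 : (l : ℕ) = 0) :
    (f : ℕ) = k - 1 ∧
      ∀ r : Fin k, i r = 2 * (k - 1 - (r : ℕ)) + 1 ∧ j r = 2 * (k - 1 - (r : ℕ)) + 2 := by
  have hfk : (f : ℕ) < k := f.2
  -- ℕ-valued versions of i and j
  set I : ℕ → ℕ := fun n => if h : n < k then i ⟨n, h⟩ else 0 with hI
  set J : ℕ → ℕ := fun n => if h : n < k then j ⟨n, h⟩ else 0 with hJ
  have hIr : ∀ (r : Fin k), I (r : ℕ) = i r := by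
    intro r; simp [hI, r.2]
  have hJr : ∀ (r : Fin k), J (r : ℕ) = j r := by
    intro r; simp [hJ, r.2]
  have haN : ∀ n : ℕ, n < k → J n = I n + 1 := by
    intro n hn
    have := ha ⟨n, hn⟩
    simp [hI, hJ, hn, this]
  have hgi : ∀ (n : ℕ) (h : n < (List.ofFn i).length), (List.ofFn i)[n] = I n := by
    intro n h
    rw [List.getElem_ofFn]
    simp only [List.length_ofFn] at h
    simp [hI, h]
  have hgj : ∀ (n : ℕ) (h : n < (List.ofFn (fun r : Fin k => j r + 1)).length),
      (List.ofFn (fun r : Fin k => j r + 1))[n] = J n + 1 := by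
    intro n h
    rw [List.getElem_ofFn]
    simp only [List.length_ofFn] at h
    simp [hJ, h]
  -- pointwise version of hb
  have key : ∀ n : ℕ, n < k - 1 →
      I (n + 1) + 2 = if n < (f : ℕ) then I n else I (n + 1) := by
    intro n hn
    have hlen1 : ((List.ofFn (fun r : Fin k => j r + 1)).eraseIdx (l : ℕ)).length = k - 1 := by
      rw [List.length_eraseIdx]; simp [l.2]
    have hlen2 : ((List.ofFn i).eraseIdx (f : ℕ)).length = k - 1 := by
      rw [List.length_eraseIdx]; simp [f.2]
    have h1 : ((List.ofFn (fun r : Fin k => j r + 1)).eraseIdx (l : ℕ))[n]'(by omega) =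
        ((List.ofFn i).eraseIdx (f : ℕ))[n]'(by omega) := by
      simp only [hb]
    rw [List.getElem_eraseIdx, List.getElem_eraseIdx] at h1
    rw [dif_neg (show ¬ n < (l : ℕ) by omega), hgj] at h1
    have hJI := haN (n + 1) (by omega)
    by_cases hcase : n < (f : ℕ)
    · rw [dif_pos hcase, hgi] at h1
      rw [if_pos hcase]
      omega
    · rw [dif_neg hcase, hgi] at h1
      rw [if_neg hcase]
      omega
  -- f = k - 1
  have hfeq : (f : ℕ) = k - 1 := by
    by_contra h
    have := key (f : ℕ) (by omega)
    rw [if_neg (lt_irrefl _)] at this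
    omega
  -- I 0 = 2k - 1
  have hl' : (0 : ℕ) = (l : ℕ) := hl0.symm
  have hi0 : I 0 = 2 * k - 1 := by
    have h1 : J (l : ℕ) = 2 * k := by rw [hJr]; exact hl
    have h2 := haN (l : ℕ) l.2
    rw [hl0] at h1 h2
    omega
  -- step
  have step : ∀ n : ℕ, n < k - 1 → I (n + 1) + 2 = I n := by
    intro n hn
    have := key n hn
    rwa [if_pos (by omega)] at this
  -- induction
  have hival : ∀ n : ℕ, n < k → I n = 2 * (k - 1 - n) + 1 := by
    intro n
    induction n with
    | zero => intro hn; rw [hi0]; omega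
    | succ m ih =>
      intro hn
      have := ih (by omega)
      have := step m (by omega)
      omega
  refine ⟨hfeq, fun r => ?_⟩
  have h1 := hival (r : ℕ) r.2
  rw [hIr] at h1
  exact ⟨h1, by rw [ha]; omega⟩
end

section
/- Let V be a type and let bs be a list of nonempty lists over V (the 'blocks'). Define the tagged flattening L as the list of pairs in V × ℕ obtained by replacing every element x of the b-th block bs[b] by the pair (x, b) and concatenating the resulting lists in order. Say a nonempty list A over V satisfies A ⊆* L if there is a contiguous interval of positions of L such that the first components of the entries of L on that interval read A in order, all entries of L on that interval have the same second component t, and no entry of L outside that interval has second component t. Then A ⊆* L if and only if there exists t < length(bs) with A = bs[t]. -/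
private lemma tagF_mem_ge {V : Type*} (bs : List (List V)) (n : ℕ) (p : V × ℕ)
    (hp : p ∈ ((bs.zipIdx n).map (fun p => p.1.map (fun x => (x, p.2)))).flatten) :
    n ≤ p.2 := by
  induction bs generalizing n with
  | nil => simp [List.zipIdx] at hp
  | cons b bs ih =>
    simp only [List.zipIdx, List.map_cons, List.flatten_cons, List.mem_append] at hp
    rcases hp with hp | hp
    · obtain ⟨x, -, rfl⟩ := List.mem_map.mp hp; exact le_refl n
    · exact Nat.le_of_succ_le (ih (n+1) hp)

private lemma tagF_filter {V : Type*} (bs : List (List V)) (n t : ℕ) :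
    (((bs.zipIdx n).map (fun p => p.1.map (fun x => (x, p.2)))).flatten).filter
        (fun p => p.2 = t) =
      if h : n ≤ t ∧ t - n < bs.length then (bs.get ⟨t - n, h.2⟩).map (fun x => (x, t))
      else [] := by
  induction bs generalizing n with
  | nil => simp [List.zipIdx]
  | cons b bs ih =>
    simp only [List.zipIdx, List.map_cons, List.flatten_cons, List.filter_append,
      List.filter_map, ih (n+1)]
    by_cases hnt : n = t
    · subst hnt
      have h1 : ¬ (n + 1 ≤ n ∧ n - (n+1) < bs.length) := by omega
      rw [dif_neg h1]
      have hb : (b.filter ((fun p => decide (p.2 = n)) ∘ (fun x => (x, n)))) = b := by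
        simp [Function.comp, List.filter_eq_self]
      have h3 : n ≤ n ∧ n - n < (b::bs).length := by simp
      rw [dif_pos h3, hb]
      simp
    · have h0 : (b.filter ((fun p => decide (p.2 = t)) ∘ (fun x => (x, n)))) = [] := by
        simp [Function.comp, hnt, List.filter_eq_nil_iff]
      rw [h0]
      by_cases h2 : n + 1 ≤ t ∧ t - (n+1) < bs.length
      · have h3 : n ≤ t ∧ t - n < (b::bs).length := by
          constructor <;> [omega; simpa using by omega]
        rw [dif_pos h2, dif_pos h3]
        simp only [List.map_nil, List.nil_append]
        congr 1
        have : t - n = (t - (n+1)) + 1 := by omega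
        simp [List.get_cons_succ, this]
      · have h3 : ¬ (n ≤ t ∧ t - n < (b::bs).length) := by
          simp only [List.length_cons]; omega
        rw [dif_neg h2, dif_neg h3]; simp

private lemma tagF_exists {V : Type*} (bs : List (List V)) (n t : ℕ) (hn : n ≤ t)
    (h : t - n < bs.length) :
    ∃ P Q : List (V × ℕ),
      ((bs.zipIdx n).map (fun p => p.1.map (fun x => (x, p.2)))).flatten =
        P ++ (bs.get ⟨t - n, h⟩).map (fun x => (x, t)) ++ Q ∧
      (∀ p ∈ P, p.2 ≠ t) ∧ (∀ p ∈ Q, p.2 ≠ t) := by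
  induction bs generalizing n with
  | nil => simp at h
  | cons b bs ih =>
    by_cases hnt : n = t
    · subst hnt
      refine ⟨[], ((bs.zipIdx (n+1)).map (fun p => p.1.map (fun x => (x, p.2)))).flatten,
        ?_, by simp, ?_⟩
      · simp [List.zipIdx]
      · intro p hp
        have := tagF_mem_ge bs (n+1) p hp
        omega
    · have h2 : t - (n+1) < bs.length := by
        simp only [List.length_cons] at h; omega
      obtain ⟨P', Q', hEq, hP', hQ'⟩ := ih (n+1) (by omega) h2
      refine ⟨b.map (fun x => (x, n)) ++ P', Q', ?_, ?_, hQ'⟩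
      · have hidx : t - n = (t - (n+1)) + 1 := by omega
        simp only [List.zipIdx, List.map_cons, List.flatten_cons, hEq, hidx,
          List.get_cons_succ, List.append_assoc]
      · intro p hp
        rcases List.mem_append.mp hp with hp | hp
        · obtain ⟨x, -, rfl⟩ := List.mem_map.mp hp; simpa using hnt
        · exact hP' p hp

/-- combinatorial core of Claim 2 (characterization of ⊆*). -/
theorem stmt5 {V : Type*} (bs : List (List V)) (hbs : ∀ b ∈ bs, b ≠ [])
    (A : List V) (hA : A ≠ []) :
    (∃ (P Q : List (V × ℕ)) (t : ℕ),
        (bs.zipIdx.map (fun p => p.1.map (fun x => (x, p.2)))).flatten =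
          P ++ A.map (fun x => (x, t)) ++ Q ∧
        (∀ p ∈ P, p.2 ≠ t) ∧ (∀ p ∈ Q, p.2 ≠ t)) ↔
      ∃ t, ∃ ht : t < bs.length, A = bs.get ⟨t, ht⟩ := by
  have henum : bs.zipIdx = bs.zipIdx 0 := rfl
  constructor
  · rintro ⟨P, Q, t, hL, hP, hQ⟩
    rw [henum] at hL
    have hfil := tagF_filter bs 0 t
    rw [hL] at hfil
    have hPf : P.filter (fun p => p.2 = t) = [] := by
      rw [List.filter_eq_nil_iff]; intro p hp; simpa using hP p hp
    have hQf : Q.filter (fun p => p.2 = t) = [] := by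
      rw [List.filter_eq_nil_iff]; intro p hp; simpa using hQ p hp
    have hAf : (A.map (fun x => (x, t))).filter (fun p => p.2 = t) =
        A.map (fun x => (x, t)) := by
      rw [List.filter_eq_self]; intro p hp
      obtain ⟨x, -, rfl⟩ := List.mem_map.mp hp; simp
    rw [List.filter_append, List.filter_append, hPf, hQf, hAf, List.nil_append,
      List.append_nil] at hfil
    by_cases ht : 0 ≤ t ∧ t - 0 < bs.length
    · rw [dif_pos ht] at hfil
      refine ⟨t, by simpa using ht.2, ?_⟩
      have := congrArg (List.map Prod.fst) hfil
      simpa [Function.comp_def] using this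
    · rw [dif_neg ht] at hfil
      exact absurd (List.map_eq_nil_iff.mp hfil) hA
  · rintro ⟨t, ht, rfl⟩
    obtain ⟨P, Q, hEq, hP, hQ⟩ := tagF_exists bs 0 t (Nat.zero_le t) (by simpa using ht)
    exact ⟨P, Q, t, by rw [henum, hEq]; simp, hP, hQ⟩
end

section
/- Let V be a type, let n ≥ 2 be a natural number, let b : ℕ → List V be injective on {1,…,n} with b(i) nonempty for every 2 ≤ i ≤ n, and let E ⊆ {1,…,n}. Then the two set equalities { b(i+1) : i odd, 1 ≤ i ≤ n−1, i ∈ E } = { b(i) : i even, 2 ≤ i ≤ n, i ∈ E } and { b(i+1) : i even, 2 ≤ i ≤ n−1, i ∈ E } = { b(i) : i odd, 3 ≤ i ≤ n, i ∈ E } both hold if and only if E = ∅ or E = {1,…,n}. -/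
/-- combinatorial core of Lemma 4 (all-or-nothing for DAG CRTs). -/
theorem stmt6 {V : Type*} (n : ℕ) (hn : 2 ≤ n) (b : ℕ → List V)
    (hb : Set.InjOn b (Set.Icc 1 n))
    (hbne : ∀ i, 2 ≤ i → i ≤ n → b i ≠ [])
    (E : Set ℕ) (hE : E ⊆ Set.Icc 1 n) :
    (({v : List V | ∃ i, Odd i ∧ 1 ≤ i ∧ i ≤ n - 1 ∧ i ∈ E ∧ v = b (i + 1)} =
        {v : List V | ∃ i, Even i ∧ 2 ≤ i ∧ i ≤ n ∧ i ∈ E ∧ v = b i}) ∧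
      ({v : List V | ∃ i, Even i ∧ 2 ≤ i ∧ i ≤ n - 1 ∧ i ∈ E ∧ v = b (i + 1)} =
        {v : List V | ∃ i, Odd i ∧ 3 ≤ i ∧ i ≤ n ∧ i ∈ E ∧ v = b i})) ↔
      (E = ∅ ∨ E = Set.Icc 1 n) := by
  constructor
  · rintro ⟨h1, h2⟩
    by_cases hEe : E = ∅
    · exact Or.inl hEe
    right
    have up : ∀ i ∈ E, i ≤ n - 1 → i + 1 ∈ E := by
      intro i hi hile
      have hi1 : 1 ≤ i := (hE hi).1
      have hin : i ≤ n := (hE hi).2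
      rcases Nat.even_or_odd i with hev | hod
      · have h2ev : 2 ≤ i := by
          rcases hev with ⟨k, hk⟩; omega
        have hmem : b (i + 1) ∈
            {v : List V | ∃ i, Even i ∧ 2 ≤ i ∧ i ≤ n - 1 ∧ i ∈ E ∧ v = b (i + 1)} :=
          ⟨i, hev, h2ev, hile, hi, rfl⟩
        rw [h2] at hmem
        obtain ⟨j, hjo, hj3, hjn, hjE, hbj⟩ := hmem
        have hji : j = i + 1 := hb ⟨by omega, hjn⟩ ⟨by omega, by omega⟩ hbj.symm
        rwa [← hji]
      · have hmem : b (i + 1) ∈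
            {v : List V | ∃ i, Odd i ∧ 1 ≤ i ∧ i ≤ n - 1 ∧ i ∈ E ∧ v = b (i + 1)} :=
          ⟨i, hod, hi1, hile, hi, rfl⟩
        rw [h1] at hmem
        obtain ⟨j, hje, hj2, hjn, hjE, hbj⟩ := hmem
        have hji : j = i + 1 := hb ⟨by omega, hjn⟩ ⟨by omega, by omega⟩ hbj.symm
        rwa [← hji]
    have down : ∀ i ∈ E, 2 ≤ i → i - 1 ∈ E := by
      intro i hi h2i
      have hin : i ≤ n := (hE hi).2
      rcases Nat.even_or_odd i with hev | hod
      · have hmem : b i ∈ {v : List V | ∃ i, Even i ∧ 2 ≤ i ∧ i ≤ n ∧ i ∈ E ∧ v = b i} :=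
          ⟨i, hev, h2i, hin, hi, rfl⟩
        rw [← h1] at hmem
        obtain ⟨j, hjo, hj1, hjn, hjE, hbj⟩ := hmem
        have hji : j + 1 = i := hb ⟨by omega, by omega⟩ ⟨by omega, hin⟩ hbj.symm
        have hji' : j = i - 1 := by omega
        rwa [← hji']
      · have h3i : 3 ≤ i := by rcases hod with ⟨k, hk⟩; omega
        have hmem : b i ∈ {v : List V | ∃ i, Odd i ∧ 3 ≤ i ∧ i ≤ n ∧ i ∈ E ∧ v = b i} :=
          ⟨i, hod, h3i, hin, hi, rfl⟩
        rw [← h2] at hmem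
        obtain ⟨j, hje, hj2, hjn, hjE, hbj⟩ := hmem
        have hji : j + 1 = i := hb ⟨by omega, by omega⟩ ⟨by omega, hin⟩ hbj.symm
        have hji' : j = i - 1 := by omega
        rwa [← hji']
    obtain ⟨k, hk⟩ := Set.nonempty_iff_ne_empty.mpr hEe
    have hk1 : 1 ≤ k := (hE hk).1
    have hkn : k ≤ n := (hE hk).2
    apply Set.Subset.antisymm hE
    have upAll : ∀ d, k + d ≤ n → k + d ∈ E := by
      intro d
      induction d with
      | zero => intro _; simpa using hk
      | succ d ih =>
          intro hle
          have h' : k + d ∈ E := ih (by omega)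
          exact up (k + d) h' (by omega)
    have downAll : ∀ d, 1 ≤ k - d → k - d ∈ E := by
      intro d
      induction d with
      | zero => intro _; simpa using hk
      | succ d ih =>
          intro hle
          have h' : k - d ∈ E := ih (by omega)
          have := down (k - d) h' (by omega)
          have heq : k - d - 1 = k - (d + 1) := by omega
          rwa [heq] at this
    intro m hm
    obtain ⟨hm1, hmn⟩ := hm
    rcases le_or_gt k m with hkm | hmk
    · have := upAll (m - k) (by omega)
      have heq : k + (m - k) = m := by omega
      rwa [heq] at this
    · have := downAll (k - m) (by omega)
      have heq : k - (k - m) = m := by omega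
      rwa [heq] at this
  · rintro (rfl | rfl)
    · constructor <;> (ext v; simp)
    · constructor
      · ext v
        constructor
        · rintro ⟨i, hod, hi1, hin, hiE, rfl⟩
          exact ⟨i + 1, hod.add_one, by omega, by omega, ⟨by omega, by omega⟩, rfl⟩
        · rintro ⟨j, hje, hj2, hjn, hjE, rfl⟩
          have hjo : Odd (j - 1) := by
            rcases hje with ⟨c, hc⟩
            exact ⟨c - 1, by omega⟩
          refine ⟨j - 1, hjo, by omega, by omega, ⟨by omega, by omega⟩, ?_⟩
          congr 1
          omega
      · ext v
        constructor
        · rintro ⟨i, hev, hi2, hin, hiE, rfl⟩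
          exact ⟨i + 1, hev.add_one, by omega, by omega, ⟨by omega, by omega⟩, rfl⟩
        · rintro ⟨j, hjo, hj3, hjn, hjE, rfl⟩
          have hje : Even (j - 1) := by
            rcases hjo with ⟨c, hc⟩
            exact ⟨c, by omega⟩
          refine ⟨j - 1, hje, by omega, by omega, ⟨by omega, by omega⟩, ?_⟩
          congr 1
          omega
end
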